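/- Let n, d ∈ ℕ with n ≥ 2 and d ≥ 2 satisfy (n+1)/(n−1) > d/2. Then for every γ ∈ (0, 1 + 1/n + (n−1)·min(1 + 1/n − d/2, 0)) one has sup_{k ∈ ℤ^d} Σ_{l₁,…,l_n ∈ ℤ^d with l₁+⋯+l_n = k} (λ_k)^γ / ( (λ_{l₁})^{1+1/n} ⋯ (λ_{l_n})^{1+1/n} ) < ∞. -/

import Mathlib

open scoped ENNReal

noncomputable def lam {d : ℕ} (x : Fin d → ℤ) : ℝ := 1 + ∑ i, ((x i : ℝ)) ^ 2

lemma lam_ge_one {d : ℕ} (x : Fin d → ℤ) : 1 ≤ lam x := by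
  have : (0:ℝ) ≤ ∑ i, ((x i : ℝ)) ^ 2 := Finset.sum_nonneg fun i _ => sq_nonneg _
  simp [lam]; linarith

lemma lam_pos {d : ℕ} (x : Fin d → ℤ) : 0 < lam x := lt_of_lt_of_le one_pos (lam_ge_one x)

lemma lam_add_le {d : ℕ} (a b : Fin d → ℤ) : lam (a + b) ≤ 4 * max (lam a) (lam b) := by
  have h1 : lam (a + b) ≤ 2 * lam a + 2 * lam b := by
    unfold lam
    have : ∑ i, (((a + b) i : ℝ)) ^ 2 ≤ ∑ i, (2 * ((a i : ℝ))^2 + 2 * ((b i : ℝ))^2) := by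
      apply Finset.sum_le_sum
      intro i _
      have : (((a + b) i : ℝ)) = (a i : ℝ) + (b i : ℝ) := by push_cast [Pi.add_apply]; ring
      rw [this]
      nlinarith [sq_nonneg ((a i : ℝ) - (b i : ℝ))]
    rw [Finset.sum_add_distrib, ← Finset.mul_sum, ← Finset.mul_sum] at this
    linarith
  have h2 : lam a ≤ max (lam a) (lam b) := le_max_left _ _
  have h3 : lam b ≤ max (lam a) (lam b) := le_max_right _ _
  linarith

lemma helper_bound {A B L p q r : ℝ} (hA : 1 ≤ A) (hAB : A ≤ B) (hL : 0 < L)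
    (hLB : L ≤ 4 * B) (hr0 : 0 ≤ r) (hrq : r ≤ q) :
    A ^ (-p) * B ^ (-q) ≤ 4 ^ r * L ^ (-r) * A ^ (-(p + q - r)) := by
  have hA0 : (0:ℝ) < A := lt_of_lt_of_le one_pos hA
  have hB0 : (0:ℝ) < B := lt_of_lt_of_le hA0 hAB
  have h1 : B ^ (-r) ≤ 4 ^ r * L ^ (-r) := by
    have hq4 : L / 4 ≤ B := by linarith
    have h := Real.rpow_le_rpow_of_nonpos (by positivity : (0:ℝ) < L / 4) hq4
      (neg_nonpos.2 hr0)
    rw [Real.div_rpow hL.le (by norm_num : (0:ℝ) ≤ 4),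
      Real.rpow_neg (by norm_num : (0:ℝ) ≤ 4)] at h
    rw [div_eq_mul_inv, inv_inv] at h
    linarith [h, mul_comm (L ^ (-r)) ((4:ℝ) ^ r)]
  have h2 : B ^ (-(q - r)) ≤ A ^ (-(q - r)) :=
    Real.rpow_le_rpow_of_nonpos hA0 hAB (by linarith)
  have e1 : A ^ (-p) * B ^ (-q) = A ^ (-p) * (B ^ (-(q - r)) * B ^ (-r)) := by
    rw [← Real.rpow_add hB0, show -(q - r) + -r = -q by ring]
  rw [e1]
  have step : B ^ (-(q - r)) * B ^ (-r) ≤ A ^ (-(q - r)) * (4 ^ r * L ^ (-r)) :=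
    mul_le_mul h2 h1 (Real.rpow_nonneg hB0.le _) (Real.rpow_nonneg hA0.le _)
  calc A ^ (-p) * (B ^ (-(q - r)) * B ^ (-r))
      ≤ A ^ (-p) * (A ^ (-(q - r)) * (4 ^ r * L ^ (-r))) :=
        mul_le_mul_of_nonneg_left step (Real.rpow_nonneg hA0.le _)
    _ = 4 ^ r * L ^ (-r) * A ^ (-(p + q - r)) := by
        rw [← mul_assoc, ← Real.rpow_add hA0, show -p + -(q - r) = -(p + q - r) by ring]
        ring

lemma conv_pointwise {d : ℕ} (p q r : ℝ) (hr0 : 0 ≤ r) (hrp : r ≤ p) (hrq : r ≤ q)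
    (k v : Fin d → ℤ) :
    lam v ^ (-p) * lam (k - v) ^ (-q) ≤
      4 ^ r * lam k ^ (-r) * (lam v ^ (-(p + q - r)) + lam (k - v) ^ (-(p + q - r))) := by
  have hmax : lam k ≤ 4 * max (lam v) (lam (k - v)) := by
    have := lam_add_le v (k - v)
    rwa [add_sub_cancel] at this
  have hposk : (0:ℝ) < lam k := lam_pos k
  rcases le_total (lam v) (lam (k - v)) with hc | hc
  · have hLB : lam k ≤ 4 * lam (k - v) := by
      rw [max_eq_right hc] at hmax; exact hmax
    have := helper_bound (p := p) (lam_ge_one v) hc hposk hLB hr0 hrq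
    have hnn : 0 ≤ 4 ^ r * lam k ^ (-r) * lam (k - v) ^ (-(p + q - r)) :=
      mul_nonneg (mul_nonneg (Real.rpow_nonneg (by norm_num) r)
        (Real.rpow_nonneg hposk.le _)) (Real.rpow_nonneg (lam_pos _).le _)
    linarith [this]
  · have hLB : lam k ≤ 4 * lam v := by
      rw [max_eq_left hc] at hmax; exact hmax
    have := helper_bound (p := q) (lam_ge_one (k - v)) hc hposk hLB hr0 hrp
    have hnn : 0 ≤ 4 ^ r * lam k ^ (-r) * lam v ^ (-(p + q - r)) :=
      mul_nonneg (mul_nonneg (Real.rpow_nonneg (by norm_num) r)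
        (Real.rpow_nonneg hposk.le _)) (Real.rpow_nonneg (lam_pos _).le _)
    calc lam v ^ (-p) * lam (k - v) ^ (-q)
        = lam (k - v) ^ (-q) * lam v ^ (-p) := mul_comm _ _
      _ ≤ 4 ^ r * lam k ^ (-r) * lam (k - v) ^ (-(q + p - r)) := this
      _ ≤ 4 ^ r * lam k ^ (-r) * (lam v ^ (-(p + q - r)) + lam (k - v) ^ (-(p + q - r))) := by
          rw [show q + p - r = p + q - r by ring]
          nlinarith [Real.rpow_nonneg (lam_pos v).le (-(p+q-r)),
            Real.rpow_nonneg hposk.le (-r), Real.rpow_nonneg (show (0:ℝ) ≤ 4 by norm_num) r,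
            mul_nonneg (Real.rpow_nonneg (show (0:ℝ) ≤ 4 by norm_num) r) (Real.rpow_nonneg hposk.le (-r))]


lemma summable_int_aux {t : ℝ} (ht : 1/2 < t) :
    Summable (fun x : ℤ => (1 + (x:ℝ)^2) ^ (-t)) := by
  have ht0 : (0:ℝ) ≤ t := by linarith
  have base : Summable (fun x : ℤ => 1 / |(x:ℝ) + 1/2| ^ (2*t)) :=
    (Real.summable_one_div_int_add_rpow (1/2) (2*t)).2 (by linarith)
  apply Summable.of_nonneg_of_le
    (fun x => Real.rpow_nonneg (by positivity) _)
    (fun x => ?_) (base.mul_left ((2:ℝ)^t))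
  set u : ℝ := |(x:ℝ) + 1/2| with hu
  have hu0 : 0 < u := by
    rw [hu, abs_pos]
    intro h0
    have : (2:ℝ) * x = -1 := by linarith
    have : (2 * x : ℤ) = -1 := by exact_mod_cast this
    omega
  have hx0 : (0:ℝ) < 1 + (x:ℝ)^2 := by positivity
  have hsq : u^2 ≤ 2 * (1 + (x:ℝ)^2) := by
    rw [hu, sq_abs]
    nlinarith [sq_nonneg ((x:ℝ) - 1/2)]
  have key : u ^ (2*t) ≤ 2^t * (1 + (x:ℝ)^2) ^ t := by
    have e1 : u ^ (2*t) = (u^2) ^ t := by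
      rw [← Real.rpow_natCast u 2, ← Real.rpow_mul hu0.le]
      norm_num
    rw [e1, ← Real.mul_rpow (by norm_num) hx0.le]
    exact Real.rpow_le_rpow (sq_nonneg u) hsq ht0
  rw [Real.rpow_neg hx0.le, mul_one_div, inv_eq_one_div,
    div_le_div_iff₀ (by positivity) (Real.rpow_pos_of_pos hu0 _)]
  calc 1 * u ^ (2*t) = u ^ (2*t) := one_mul _
    _ ≤ 2^t * (1 + (x:ℝ)^2) ^ t := key

lemma Z1_lt_top {t : ℝ} (ht : 1/2 < t) :
    ∑' x : ℤ, ENNReal.ofReal ((1 + (x:ℝ)^2) ^ (-t)) < ⊤ := by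
  rw [← ENNReal.ofReal_tsum_of_nonneg (fun x => Real.rpow_nonneg (by positivity) _)
    (summable_int_aux ht)]
  exact ENNReal.ofReal_lt_top

lemma tsum_pi_prod (f : ℤ → ℝ≥0∞) : ∀ m : ℕ,
    ∑' g : Fin m → ℤ, ∏ i, f (g i) = (∑' x : ℤ, f x) ^ m
  | 0 => by simp [tsum_fintype]
  | m + 1 => by
    rw [← (Fin.consEquiv (fun _ : Fin (m+1) => ℤ)).tsum_eq, ENNReal.tsum_prod']
    have : ∀ (x : ℤ) (h : Fin m → ℤ),
        (∏ i, f ((Fin.consEquiv (fun _ : Fin (m+1) => ℤ)) (x, h) i))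
          = f x * ∏ i, f (h i) := by
      intro x h
      rw [Fin.prod_univ_succ]
      simp [Fin.consEquiv]
    simp_rw [this]
    rw [pow_succ, ← tsum_pi_prod f m]
    simp_rw [ENNReal.tsum_mul_left]
    rw [ENNReal.tsum_mul_right]
    ring

lemma Zd_lt_top (d : ℕ) (hd : 1 ≤ d) {s : ℝ} (hs : (d:ℝ)/2 < s) :
    ∑' v : Fin d → ℤ, ENNReal.ofReal (lam v ^ (-s)) < ⊤ := by
  have hd0 : (0:ℝ) < d := by exact_mod_cast hd
  set t := s / d with htdef
  have ht : 1/2 < t := by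
    rw [htdef, lt_div_iff₀ hd0]
    linarith
  have hbd : ∀ v : Fin d → ℤ, lam v ^ (-s) ≤ ∏ i, (1 + ((v i : ℝ))^2) ^ (-t) := by
    intro v
    have h1 : ∀ i, (1 + ((v i : ℝ))^2) ≤ lam v := by
      intro i
      have : ((v i : ℝ))^2 ≤ ∑ j, ((v j : ℝ))^2 :=
        Finset.single_le_sum (fun j _ => sq_nonneg ((v j : ℝ))) (Finset.mem_univ i)
      unfold lam; linarith
    have hprodpos : (0:ℝ) < ∏ i, (1 + ((v i : ℝ))^2) :=
      Finset.prod_pos fun i _ => by positivity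
    have h2 : ∏ i, (1 + ((v i : ℝ))^2) ≤ lam v ^ d := by
      calc ∏ i, (1 + ((v i : ℝ))^2) ≤ ∏ _i : Fin d, lam v :=
            Finset.prod_le_prod (fun i _ => by positivity) (fun i _ => h1 i)
        _ = lam v ^ d := by simp [Finset.prod_const, Finset.card_univ]
    have e1 : lam v ^ (-s) = ((lam v ^ d : ℝ)) ^ (-t) := by
      rw [← Real.rpow_natCast (lam v) d, ← Real.rpow_mul (lam_pos v).le]
      congr 1
      field_simp [htdef]
      rw [htdef]; field_simp
    rw [e1]
    calc ((lam v ^ d : ℝ)) ^ (-t) ≤ (∏ i, (1 + ((v i : ℝ))^2)) ^ (-t) :=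
          Real.rpow_le_rpow_of_nonpos hprodpos h2 (by linarith)
      _ = ∏ i, (1 + ((v i : ℝ))^2) ^ (-t) :=
          (Real.finset_prod_rpow _ _ (fun i _ => by positivity) _).symm
  calc ∑' v : Fin d → ℤ, ENNReal.ofReal (lam v ^ (-s))
      ≤ ∑' v : Fin d → ℤ, ∏ i, ENNReal.ofReal ((1 + ((v i : ℝ))^2) ^ (-t)) := by
        apply ENNReal.tsum_le_tsum
        intro v
        rw [← ENNReal.ofReal_prod_of_nonneg (fun i _ => Real.rpow_nonneg (by positivity) _)]
        exact ENNReal.ofReal_le_ofReal (hbd v)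
    _ = (∑' x : ℤ, ENNReal.ofReal ((1 + (x:ℝ)^2) ^ (-t))) ^ d :=
        tsum_pi_prod (fun x : ℤ => ENNReal.ofReal ((1 + (x:ℝ)^2) ^ (-t))) d
    _ < ⊤ := ENNReal.pow_lt_top (Z1_lt_top ht)

lemma conv_sum_le (d : ℕ) (hd : 1 ≤ d) (p q r : ℝ) (hr0 : 0 ≤ r) (hrp : r ≤ p)
    (hrq : r ≤ q) (hs : (d:ℝ)/2 < p + q - r) :
    ∃ C : ℝ≥0∞, C ≠ ⊤ ∧ ∀ k : Fin d → ℤ,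
      ∑' v : Fin d → ℤ,
          ENNReal.ofReal (lam v ^ (-p)) * ENNReal.ofReal (lam (k - v) ^ (-q))
        ≤ C * ENNReal.ofReal (lam k ^ (-r)) := by
  set Z : ℝ≥0∞ := ∑' v : Fin d → ℤ, ENNReal.ofReal (lam v ^ (-(p + q - r))) with hZ
  have hZtop : Z ≠ ⊤ := (Zd_lt_top d hd hs).ne
  refine ⟨ENNReal.ofReal (4 ^ r) * (2 * Z), by
    exact ENNReal.mul_ne_top ENNReal.ofReal_ne_top
      (ENNReal.mul_ne_top (by norm_num) hZtop), fun k => ?_⟩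
  have step1 : ∀ v : Fin d → ℤ,
      ENNReal.ofReal (lam v ^ (-p)) * ENNReal.ofReal (lam (k - v) ^ (-q))
        ≤ ENNReal.ofReal (4 ^ r) * ENNReal.ofReal (lam k ^ (-r)) *
            (ENNReal.ofReal (lam v ^ (-(p + q - r))) +
              ENNReal.ofReal (lam (k - v) ^ (-(p + q - r)))) := by
    intro v
    rw [← ENNReal.ofReal_mul (Real.rpow_nonneg (lam_pos v).le _),
      ← ENNReal.ofReal_mul (Real.rpow_nonneg (by norm_num) _),
      ← ENNReal.ofReal_add (Real.rpow_nonneg (lam_pos v).le _)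
        (Real.rpow_nonneg (lam_pos _).le _),
      ← ENNReal.ofReal_mul (by
          exact mul_nonneg (Real.rpow_nonneg (by norm_num) _)
            (Real.rpow_nonneg (lam_pos k).le _))]
    exact ENNReal.ofReal_le_ofReal (conv_pointwise p q r hr0 hrp hrq k v)
  calc ∑' v : Fin d → ℤ,
        ENNReal.ofReal (lam v ^ (-p)) * ENNReal.ofReal (lam (k - v) ^ (-q))
      ≤ ∑' v : Fin d → ℤ, ENNReal.ofReal (4 ^ r) * ENNReal.ofReal (lam k ^ (-r)) *
          (ENNReal.ofReal (lam v ^ (-(p + q - r))) +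
            ENNReal.ofReal (lam (k - v) ^ (-(p + q - r)))) :=
        ENNReal.tsum_le_tsum step1
    _ = ENNReal.ofReal (4 ^ r) * ENNReal.ofReal (lam k ^ (-r)) *
        ((∑' v : Fin d → ℤ, ENNReal.ofReal (lam v ^ (-(p + q - r)))) +
          ∑' v : Fin d → ℤ, ENNReal.ofReal (lam (k - v) ^ (-(p + q - r)))) := by
        rw [ENNReal.tsum_mul_left, ENNReal.tsum_add]
    _ = ENNReal.ofReal (4 ^ r) * ENNReal.ofReal (lam k ^ (-r)) * (Z + Z) := by
        congr 1
        congr 1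
        exact (Equiv.subLeft k).tsum_eq
          (fun v : Fin d → ℤ => ENNReal.ofReal (lam v ^ (-(p + q - r))))
    _ = ENNReal.ofReal (4 ^ r) * (2 * Z) * ENNReal.ofReal (lam k ^ (-r)) := by
        rw [two_mul]; ring

lemma G_succ (d : ℕ) (a : ℝ) (m : ℕ) (k : Fin d → ℤ) :
    (∑' u : Fin (m+1) → (Fin d → ℤ),
        (∏ j, ENNReal.ofReal (lam (u j) ^ (-a))) *
          ENNReal.ofReal (lam (k - ∑ j, u j) ^ (-a)))
      = ∑' v : Fin d → ℤ, ENNReal.ofReal (lam v ^ (-a)) *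
          ∑' u : Fin m → (Fin d → ℤ),
            (∏ j, ENNReal.ofReal (lam (u j) ^ (-a))) *
              ENNReal.ofReal (lam ((k - v) - ∑ j, u j) ^ (-a)) := by
  rw [← (Fin.consEquiv (fun _ : Fin (m+1) => (Fin d → ℤ))).tsum_eq, ENNReal.tsum_prod']
  congr 1
  ext v
  rw [← ENNReal.tsum_mul_left]
  congr 1
  ext u
  have e1 : ∀ j : Fin m, (Fin.consEquiv (fun _ : Fin (m+1) => (Fin d → ℤ))) (v, u) j.succ
      = u j := by intro j; simp [Fin.consEquiv]
  have e0 : (Fin.consEquiv (fun _ : Fin (m+1) => (Fin d → ℤ))) (v, u) 0 = v := by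
    simp [Fin.consEquiv]
  rw [Fin.prod_univ_succ, Fin.sum_univ_succ, e0]
  simp_rw [e1]
  rw [sub_add_eq_sub_sub]
  ring

lemma G_bound (d : ℕ) (hd : 1 ≤ d) (a δ : ℝ) (hδ : 0 < δ) (ha : 0 < a) :
    ∀ m : ℕ, 0 < a + m * (min (a - (d:ℝ)/2) 0 - δ) →
    ∃ C : ℝ≥0∞, C ≠ ⊤ ∧ ∀ k : Fin d → ℤ,
      (∑' u : Fin m → (Fin d → ℤ),
          (∏ j, ENNReal.ofReal (lam (u j) ^ (-a))) *
            ENNReal.ofReal (lam (k - ∑ j, u j) ^ (-a)))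
        ≤ C * ENNReal.ofReal (lam k ^ (-(a + m * (min (a - (d:ℝ)/2) 0 - δ)))) := by
  intro m
  induction m with
  | zero =>
    intro _
    refine ⟨1, ENNReal.one_ne_top, fun k => ?_⟩
    rw [one_mul]
    have : ∀ u : Fin 0 → (Fin d → ℤ),
        (∏ j, ENNReal.ofReal (lam (u j) ^ (-a))) *
          ENNReal.ofReal (lam (k - ∑ j, u j) ^ (-a))
        = ENNReal.ofReal (lam k ^ (-(a + (0:ℕ) * (min (a - (d:ℝ)/2) 0 - δ)))) := by
      intro u
      simp
    rw [tsum_congr this, tsum_fintype]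
    simp
  | succ m ih =>
    intro hpos
    set inc := min (a - (d:ℝ)/2) 0 - δ with hinc
    have hinc_neg : inc < 0 := by
      have : min (a - (d:ℝ)/2) 0 ≤ 0 := min_le_right _ _
      simp only [hinc]; linarith
    set rm := a + m * inc with hrm
    set r' := a + (m+1 : ℕ) * inc with hr'
    have hr'rm : r' = rm + inc := by rw [hr', hrm]; push_cast; ring
    have hr'pos : 0 < r' := hpos
    have hrmpos : 0 < rm := by rw [hr'rm] at hr'pos; linarith
    have hr'le_rm : r' ≤ rm := by rw [hr'rm]; linarith
    have hr'le_a : r' ≤ a := by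
      rw [hr']
      have : (0:ℝ) ≤ (m+1 : ℕ) := by positivity
      nlinarith
    obtain ⟨C, hC, hCb⟩ := ih hrmpos
    have hcond : (d:ℝ)/2 < a + rm - r' := by
      rw [hr'rm]
      have : a + rm - (rm + inc) = a - inc := by ring
      rw [this, hinc]
      rcases le_or_gt (a - (d:ℝ)/2) 0 with hm | hm
      · rw [min_eq_left hm]; linarith
      · rw [min_eq_right hm.le]; linarith
    obtain ⟨C', hC', hC'b⟩ := conv_sum_le d hd a rm r' hr'pos.le hr'le_a hr'le_rm hcond
    refine ⟨C * C', ENNReal.mul_ne_top hC hC', fun k => ?_⟩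
    rw [G_succ]
    calc ∑' v : Fin d → ℤ, ENNReal.ofReal (lam v ^ (-a)) *
          ∑' u : Fin m → (Fin d → ℤ),
            (∏ j, ENNReal.ofReal (lam (u j) ^ (-a))) *
              ENNReal.ofReal (lam ((k - v) - ∑ j, u j) ^ (-a))
        ≤ ∑' v : Fin d → ℤ, ENNReal.ofReal (lam v ^ (-a)) *
            (C * ENNReal.ofReal (lam (k - v) ^ (-rm))) := by
          apply ENNReal.tsum_le_tsum
          intro v
          exact mul_le_mul_right (hCb (k - v)) _
      _ = C * ∑' v : Fin d → ℤ,
            ENNReal.ofReal (lam v ^ (-a)) * ENNReal.ofReal (lam (k - v) ^ (-rm)) := by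
          rw [← ENNReal.tsum_mul_left]
          congr 1
          ext v
          ring
      _ ≤ C * (C' * ENNReal.ofReal (lam k ^ (-r'))) :=
          mul_le_mul_right (hC'b k) _
      _ = C * C' * ENNReal.ofReal (lam k ^ (-r')) := by ring

noncomputable def tupleEquiv (m : ℕ) {V : Type*} [AddCommGroup V] (k : V) :
    (Fin m → V) ≃ {l : Fin (m+1) → V // ∑ j, l j = k} where
  toFun u := ⟨Fin.snoc u (k - ∑ j, u j), by
    rw [Fin.sum_univ_castSucc]
    simp⟩
  invFun l := Fin.init l.1
  left_inv u := by
    funext j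
    simp [Fin.init]
  right_inv l := by
    apply Subtype.ext
    have hsum := l.2
    rw [Fin.sum_univ_castSucc] at hsum
    have hlast : k - ∑ j : Fin m, Fin.init l.1 j = l.1 (Fin.last m) := by
      have : ∑ j : Fin m, Fin.init l.1 j = ∑ j : Fin m, l.1 j.castSucc := rfl
      rw [this, eq_sub_of_add_eq' hsum]
    show Fin.snoc (Fin.init l.1) (k - ∑ j, Fin.init l.1 j) = l.1
    rw [hlast, Fin.snoc_init_self]

/-- Summability for averaged Wick powers: if `n, d ≥ 2` and `(n+1)/(n−1) > d/2`, then
for every `γ ∈ (0, 1 + 1/n + (n−1)·min(1 + 1/n − d/2, 0))` one has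
`sup_{k ∈ ℤ^d} Σ_{l₁+⋯+l_n = k} (λ_k)^γ / ((λ_{l₁})^{1+1/n}⋯(λ_{l_n})^{1+1/n}) < ∞`. -/
theorem averaged_wick_power_summability (n d : ℕ) (hn : 2 ≤ n) (hd : 2 ≤ d)
    (h : ((n : ℝ) + 1) / ((n : ℝ) - 1) > (d : ℝ) / 2) (γ : ℝ) (hγ0 : 0 < γ)
    (hγ : γ < 1 + 1 / (n : ℝ) + ((n : ℝ) - 1) * min (1 + 1 / (n : ℝ) - (d : ℝ) / 2) 0) :
    (⨆ k : Fin d → ℤ,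
        ∑' l : {l : Fin n → (Fin d → ℤ) // ∑ j, l j = k},
          ENNReal.ofReal ((lam k) ^ γ /
            ∏ j, (lam (l.1 j)) ^ (1 + 1 / (n : ℝ)))) < ⊤ := by
  obtain ⟨m, rfl⟩ : ∃ m, n = m + 1 := ⟨n - 1, by omega⟩
  have hm1 : 1 ≤ m := by omega
  have hd1 : 1 ≤ d := by omega
  have hmR : (0:ℝ) < (m:ℝ) := by exact_mod_cast hm1
  set a : ℝ := 1 + 1 / ((m+1 : ℕ) : ℝ) with ha
  have hγlt : γ < a + (m:ℝ) * min (a - (d:ℝ)/2) 0 := by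
    have hc : ((m+1:ℕ):ℝ) - 1 = (m:ℝ) := by push_cast; ring
    rw [hc] at hγ
    exact hγ
  set δ : ℝ := (a + (m:ℝ) * min (a - (d:ℝ)/2) 0 - γ) / m with hδdef
  have hδ : 0 < δ := div_pos (by linarith) hmR
  have hrγ : a + (m:ℝ) * (min (a - (d:ℝ)/2) 0 - δ) = γ := by
    rw [hδdef]
    field_simp
    ring
  have ha0 : 0 < a := by positivity
  obtain ⟨C, hC, hCb⟩ := G_bound d hd1 a δ hδ ha0 m (by rw [hrγ]; exact hγ0)
  have hbound : ∀ k : Fin d → ℤ,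
      (∑' l : {l : Fin (m+1) → (Fin d → ℤ) // ∑ j, l j = k},
        ENNReal.ofReal ((lam k) ^ γ / ∏ j, (lam (l.1 j)) ^ a)) ≤ C := by
    intro k
    rw [← (tupleEquiv m k).tsum_eq]
    have hsummand : ∀ u : Fin m → (Fin d → ℤ),
        ENNReal.ofReal ((lam k) ^ γ /
            ∏ j, (lam (((tupleEquiv m k) u).1 j)) ^ a)
        = ENNReal.ofReal (lam k ^ γ) *
          ((∏ j, ENNReal.ofReal (lam (u j) ^ (-a))) *
            ENNReal.ofReal (lam (k - ∑ j, u j) ^ (-a))) := by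
      intro u
      have hL : ∀ j : Fin m, ((tupleEquiv m k) u).1 j.castSucc = u j := by
        intro j
        show (Fin.snoc u (k - ∑ j, u j) : Fin (m+1) → Fin d → ℤ) j.castSucc = u j
        simp
      have hLl : ((tupleEquiv m k) u).1 (Fin.last m) = k - ∑ j, u j := by
        show (Fin.snoc u (k - ∑ j, u j) : Fin (m+1) → Fin d → ℤ) (Fin.last m) = _
        simp
      rw [Fin.prod_univ_castSucc]
      simp_rw [hL, hLl]
      have hrw : lam k ^ γ / ((∏ j, lam (u j) ^ a) * lam (k - ∑ j, u j) ^ a)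
          = lam k ^ γ * ((∏ j, lam (u j) ^ (-a)) * lam (k - ∑ j, u j) ^ (-a)) := by
        rw [div_eq_mul_inv, mul_inv]
        congr 1
        congr 1
        · rw [← Finset.prod_inv_distrib]
          exact Finset.prod_congr rfl fun j _ => (Real.rpow_neg (lam_pos _).le a).symm
        · exact (Real.rpow_neg (lam_pos _).le a).symm
      rw [hrw, ENNReal.ofReal_mul (Real.rpow_nonneg (lam_pos k).le γ),
        ENNReal.ofReal_mul (Finset.prod_nonneg fun j _ => Real.rpow_nonneg (lam_pos _).le _),
        ENNReal.ofReal_prod_of_nonneg (fun j _ => Real.rpow_nonneg (lam_pos _).le _)]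
    rw [tsum_congr hsummand, ENNReal.tsum_mul_left]
    have hG := hCb k
    rw [hrγ] at hG
    calc ENNReal.ofReal (lam k ^ γ) *
          ∑' u : Fin m → (Fin d → ℤ),
            (∏ j, ENNReal.ofReal (lam (u j) ^ (-a))) *
              ENNReal.ofReal (lam (k - ∑ j, u j) ^ (-a))
        ≤ ENNReal.ofReal (lam k ^ γ) * (C * ENNReal.ofReal (lam k ^ (-γ))) :=
          mul_le_mul_right hG _
      _ = C * (ENNReal.ofReal (lam k ^ γ) * ENNReal.ofReal (lam k ^ (-γ))) := by ring
      _ = C := by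
          rw [← ENNReal.ofReal_mul (Real.rpow_nonneg (lam_pos k).le γ),
            ← Real.rpow_add (lam_pos k), add_neg_cancel, Real.rpow_zero,
            ENNReal.ofReal_one, mul_one]
  exact lt_of_le_of_lt (iSup_le hbound) hC.lt_top
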